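/- arXiv:1804.08814 — 6 statements merged into one kernel-verified Lean document; each statement's English description precedes it below -/
import Mathlib

section
/- For γ > 1, the function g₁(w) = ρ·s(w) = ρ·log(p(w)/ρ^γ) is strictly concave on the open convex set D = {(ρ, m, E) ∈ ℝ³ : ρ > 0, p(w) > 0}. -/
open Real MeasureTheory

/-- Pressure of a state `w = (ρ, m, E)` for adiabatic exponent `γ`:
`p(w) = (γ − 1)(E − m²/(2ρ))`. -/
noncomputable def press (γ : ℝ) (w : ℝ × ℝ × ℝ) : ℝ :=
  (γ - 1) * (w.2.2 - w.2.1 ^ 2 / (2 * w.1))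

/-- Specific entropy `s(w) = log(p(w)/ρ^γ)`. -/
noncomputable def entr (γ : ℝ) (w : ℝ × ℝ × ℝ) : ℝ :=
  Real.log (press γ w / w.1 ^ γ)

/-- `q(w) = (s₀ − s(w))·ρ`. -/
noncomputable def qf (γ s₀ : ℝ) (w : ℝ × ℝ × ℝ) : ℝ :=
  (s₀ - entr γ w) * w.1

/-- Kinetic-energy convexity gap identity. -/
lemma kin_gap (ρ0 ρ1 m0 m1 E0 E1 a b : ℝ) (h0 : ρ0 ≠ 0) (h1 : ρ1 ≠ 0)
    (h : a * ρ0 + b * ρ1 ≠ 0) :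
    (a * E0 + b * E1) - (a * m0 + b * m1) ^ 2 / (2 * (a * ρ0 + b * ρ1)) =
      a * (E0 - m0 ^ 2 / (2 * ρ0)) + b * (E1 - m1 ^ 2 / (2 * ρ1)) +
        a * b * (m0 * ρ1 - m1 * ρ0) ^ 2 / (2 * ρ0 * ρ1 * (a * ρ0 + b * ρ1)) := by
  field_simp
  ring

/-- Logarithm expansion of the entropy density. -/
lemma log_expand (γ ρ e : ℝ) (hρ : 0 < ρ) (he : 0 < e) (hγ : 1 < γ) :
    ρ * Real.log ((γ - 1) * e / ρ ^ γ) =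
      ρ * Real.log (e / ρ) - (γ - 1) * (ρ * Real.log ρ) + ρ * Real.log (γ - 1) := by
  have hγ' : γ - 1 ≠ 0 := by linarith
  rw [Real.log_div (by positivity) (ne_of_gt (Real.rpow_pos_of_pos hρ γ)),
    Real.log_mul hγ' (ne_of_gt he), Real.log_rpow hρ,
    Real.log_div (ne_of_gt he) (ne_of_gt hρ)]
  ring

/-- For `γ > 1`, the function `g₁(w) = ρ·s(w) = ρ·log(p(w)/ρ^γ)` is strictly
concave on the open convex set `D = {(ρ, m, E) : ρ > 0, p(w) > 0}`. -/
theorem rho_entropy_strictConcave (γ : ℝ) (hγ : 1 < γ) :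
    StrictConcaveOn ℝ {w : ℝ × ℝ × ℝ | 0 < w.1 ∧ 0 < press γ w}
      (fun w => w.1 * entr γ w) := by
  have hγ1 : (0:ℝ) < γ - 1 := by linarith
  constructor
  · -- convexity of the set
    rintro ⟨ρ0, m0, E0⟩ ⟨hρ0, hp0⟩ ⟨ρ1, m1, E1⟩ ⟨hρ1, hp1⟩ a b ha hb hab
    simp only [press, Set.mem_setOf_eq, Prod.smul_mk, Prod.mk_add_mk, smul_eq_mul] at *
    have he0 : 0 < E0 - m0 ^ 2 / (2 * ρ0) := by nlinarith
    have he1 : 0 < E1 - m1 ^ 2 / (2 * ρ1) := by nlinarith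
    have hmin : 0 < min ρ0 ρ1 := lt_min hρ0 hρ1
    have hρ : 0 < a * ρ0 + b * ρ1 := by
      nlinarith [mul_le_mul_of_nonneg_left (min_le_left ρ0 ρ1) ha,
        mul_le_mul_of_nonneg_left (min_le_right ρ0 ρ1) hb]
    refine ⟨hρ, ?_⟩
    rw [kin_gap ρ0 ρ1 m0 m1 E0 E1 a b hρ0.ne' hρ1.ne' hρ.ne']
    have hmin' : 0 < min (E0 - m0 ^ 2 / (2 * ρ0)) (E1 - m1 ^ 2 / (2 * ρ1)) := lt_min he0 he1
    have hgap : 0 ≤ a * b * (m0 * ρ1 - m1 * ρ0) ^ 2 / (2 * ρ0 * ρ1 * (a * ρ0 + b * ρ1)) := by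
      apply div_nonneg
      · positivity
      · positivity
    apply mul_pos hγ1
    nlinarith [mul_le_mul_of_nonneg_left
        (min_le_left (E0 - m0 ^ 2 / (2 * ρ0)) (E1 - m1 ^ 2 / (2 * ρ1))) ha,
      mul_le_mul_of_nonneg_left
        (min_le_right (E0 - m0 ^ 2 / (2 * ρ0)) (E1 - m1 ^ 2 / (2 * ρ1))) hb]
  · -- strict concavity inequality
    rintro ⟨ρ0, m0, E0⟩ ⟨hρ0, hp0⟩ ⟨ρ1, m1, E1⟩ ⟨hρ1, hp1⟩ hne a b ha hb hab
    simp only [press, entr, Set.mem_setOf_eq, Prod.smul_mk, Prod.mk_add_mk,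
      smul_eq_mul] at *
    have he0 : 0 < E0 - m0 ^ 2 / (2 * ρ0) := by nlinarith
    have he1 : 0 < E1 - m1 ^ 2 / (2 * ρ1) := by nlinarith
    have hρ : 0 < a * ρ0 + b * ρ1 := by nlinarith [mul_pos ha hρ0, mul_pos hb hρ1]
    have hgapeq := kin_gap ρ0 ρ1 m0 m1 E0 E1 a b hρ0.ne' hρ1.ne' hρ.ne'
    set e0 := E0 - m0 ^ 2 / (2 * ρ0) with he0def
    set e1 := E1 - m1 ^ 2 / (2 * ρ1) with he1def
    set ρ := a * ρ0 + b * ρ1 with hρdef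
    clear_value e0 e1 ρ
    have hae : 0 < a * e0 + b * e1 := by nlinarith [mul_pos ha he0, mul_pos hb he1]
    have hgap : 0 ≤ a * b * (m0 * ρ1 - m1 * ρ0) ^ 2 / (2 * ρ0 * ρ1 * ρ) := by
      apply div_nonneg
      · positivity
      · positivity
    have het : 0 < (a * E0 + b * E1) - (a * m0 + b * m1) ^ 2 / (2 * ρ) := by
      rw [hgapeq]; linarith
    set et := (a * E0 + b * E1) - (a * m0 + b * m1) ^ 2 / (2 * ρ) with hetdef
    clear_value et
    rw [log_expand γ ρ0 e0 hρ0 he0 hγ, log_expand γ ρ1 e1 hρ1 he1 hγ,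
      log_expand γ ρ et hρ het hγ]
    -- weights for log-concavity
    have hw0 : (0:ℝ) < a * ρ0 / ρ := by positivity
    have hw1 : (0:ℝ) < b * ρ1 / ρ := by positivity
    have hwsum : a * ρ0 / ρ + b * ρ1 / ρ = 1 := by
      rw [← add_div, ← hρdef, div_self hρ.ne']
    have hx0 : e0 / ρ0 ∈ Set.Ioi (0:ℝ) := Set.mem_Ioi.2 (div_pos he0 hρ0)
    have hx1 : e1 / ρ1 ∈ Set.Ioi (0:ℝ) := Set.mem_Ioi.2 (div_pos he1 hρ1)
    have hptmix : (a * ρ0 / ρ) * (e0 / ρ0) + (b * ρ1 / ρ) * (e1 / ρ1)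
        = (a * e0 + b * e1) / ρ := by
      field_simp
    -- nonstrict log-concavity step
    have hA0 : a * (ρ0 * Real.log (e0 / ρ0)) + b * (ρ1 * Real.log (e1 / ρ1)) ≤
        ρ * Real.log ((a * e0 + b * e1) / ρ) := by
      have hw := strictConcaveOn_log_Ioi.concaveOn.2 hx0 hx1 hw0.le hw1.le hwsum
      simp only [smul_eq_mul] at hw
      rw [hptmix, div_mul_eq_mul_div, div_mul_eq_mul_div, ← add_div,
        div_le_iff₀ hρ] at hw
      linarith [hw, mul_comm (Real.log ((a * e0 + b * e1) / ρ)) ρ]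
    -- nonstrict monotone step
    have haet : a * e0 + b * e1 ≤ et := by rw [hgapeq]; linarith
    have hmono : ρ * Real.log ((a * e0 + b * e1) / ρ) ≤ ρ * Real.log (et / ρ) :=
      mul_le_mul_of_nonneg_left
        (Real.log_le_log (div_pos hae hρ) ((div_le_div_iff_of_pos_right hρ).mpr haet)) hρ.le
    have hA : a * (ρ0 * Real.log (e0 / ρ0)) + b * (ρ1 * Real.log (e1 / ρ1)) ≤
        ρ * Real.log (et / ρ) := hA0.trans hmono
    -- nonstrict x log x step
    have hB0 : ρ * Real.log ρ ≤ a * (ρ0 * Real.log ρ0) + b * (ρ1 * Real.log ρ1) := by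
      have h := Real.convexOn_mul_log.2 (Set.mem_Ici.2 hρ0.le) (Set.mem_Ici.2 hρ1.le)
        ha.le hb.le hab
      simp only [smul_eq_mul] at h
      rw [← hρdef] at h
      exact h
    have hB : (γ - 1) * (ρ * Real.log ρ) ≤
        (γ - 1) * (a * (ρ0 * Real.log ρ0) + b * (ρ1 * Real.log ρ1)) :=
      mul_le_mul_of_nonneg_left hB0 hγ1.le
    have hexp : ρ * Real.log (γ - 1) =
        a * (ρ0 * Real.log (γ - 1)) + b * (ρ1 * Real.log (γ - 1)) := by
      rw [hρdef]; ring
    have hexp2 : ∀ X Y : ℝ, (γ - 1) * (a * X + b * Y) =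
        a * ((γ - 1) * X) + b * ((γ - 1) * Y) := fun X Y => by ring
    by_cases hρ01 : ρ0 = ρ1
    · by_cases hm : m0 = m1
      · -- energies must differ
        have hE : E0 ≠ E1 := by
          intro h
          exact hne (by rw [hρ01, hm, h])
        have he01 : e0 ≠ e1 := by
          intro h
          apply hE
          rw [he0def, he1def, hρ01, hm] at h
          linarith
        have hxne : e0 / ρ0 ≠ e1 / ρ1 := by
          rw [hρ01]
          intro h
          apply he01
          field_simp [hρ1.ne'] at h
          linarith [h]
        have hAs : a * (ρ0 * Real.log (e0 / ρ0)) + b * (ρ1 * Real.log (e1 / ρ1)) <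
            ρ * Real.log ((a * e0 + b * e1) / ρ) := by
          have hw := strictConcaveOn_log_Ioi.2 hx0 hx1 hxne hw0 hw1 hwsum
          simp only [smul_eq_mul] at hw
          rw [hptmix, div_mul_eq_mul_div, div_mul_eq_mul_div, ← add_div,
            div_lt_iff₀ hρ] at hw
          linarith [hw, mul_comm (Real.log ((a * e0 + b * e1) / ρ)) ρ]
        have hAstr := hAs.trans_le hmono
        linarith [hA, hB, hexp, hexp2 (ρ0 * Real.log ρ0) (ρ1 * Real.log ρ1)]
      · -- momenta differ: kinetic gap is strict
        have hne0 : m0 * ρ1 - m1 * ρ0 ≠ 0 := by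
          rw [← hρ01]
          intro h
          apply hm
          have : (m0 - m1) * ρ0 = 0 := by linarith
          have := mul_eq_zero.mp this
          rcases this with h' | h'
          · linarith
          · exact absurd h' hρ0.ne'
        have hgap' : 0 < a * b * (m0 * ρ1 - m1 * ρ0) ^ 2 / (2 * ρ0 * ρ1 * ρ) := by
          apply div_pos
          · positivity
          · positivity
        have haet' : a * e0 + b * e1 < et := by rw [hgapeq]; linarith
        have hmono' : ρ * Real.log ((a * e0 + b * e1) / ρ) < ρ * Real.log (et / ρ) :=
          mul_lt_mul_of_pos_left
            (Real.log_lt_log (div_pos hae hρ) ((div_lt_div_iff_of_pos_right hρ).mpr haet')) hρ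
        have hAstr := hA0.trans_lt hmono'
        linarith [hB, hexp, hexp2 (ρ0 * Real.log ρ0) (ρ1 * Real.log ρ1)]
    · -- densities differ: x log x is strictly convex
      have hBs : ρ * Real.log ρ < a * (ρ0 * Real.log ρ0) + b * (ρ1 * Real.log ρ1) := by
        have h := Real.strictConvexOn_mul_log.2 (Set.mem_Ici.2 hρ0.le)
          (Set.mem_Ici.2 hρ1.le) hρ01 ha hb hab
        simp only [smul_eq_mul] at h
        rw [← hρdef] at h
        exact h
      have hBstr : (γ - 1) * (ρ * Real.log ρ) <
          (γ - 1) * (a * (ρ0 * Real.log ρ0) + b * (ρ1 * Real.log ρ1)) :=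
        mul_lt_mul_of_pos_left hBs hγ1
      linarith [hA, hexp, hexp2 (ρ0 * Real.log ρ0) (ρ1 * Real.log ρ1)]
end

section
/- For γ > 1 and any constant s₀ ∈ ℝ, the function q(w) = (s₀ − s(w))·ρ is strictly convex on the open convex set D = {(ρ, m, E) ∈ ℝ³ : ρ > 0, p(w) > 0}. -/
open Real MeasureTheory

/-- Log-sum inequality (nonstrict). -/
lemma logsum_le {ρ₁ ρ₂ u₁ u₂ a b : ℝ} (hρ₁ : 0 < ρ₁) (hρ₂ : 0 < ρ₂)
    (hu₁ : 0 < u₁) (hu₂ : 0 < u₂) (ha : 0 < a) (hb : 0 < b) (hab : a + b = 1) :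
    a * (ρ₁ * (Real.log u₁ - Real.log ρ₁)) + b * (ρ₂ * (Real.log u₂ - Real.log ρ₂)) ≤
      (a * ρ₁ + b * ρ₂) * (Real.log (a * u₁ + b * u₂) - Real.log (a * ρ₁ + b * ρ₂)) := by
  have hR : 0 < a * ρ₁ + b * ρ₂ := by positivity
  have hjen := strictConcaveOn_log_Ioi.concaveOn.2 (Set.mem_Ioi.2 (div_pos hu₁ hρ₁))
    (Set.mem_Ioi.2 (div_pos hu₂ hρ₂)) (by positivity : (0:ℝ) ≤ a * ρ₁ / (a * ρ₁ + b * ρ₂))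
    (by positivity : (0:ℝ) ≤ b * ρ₂ / (a * ρ₁ + b * ρ₂)) (by field_simp)
  simp only [smul_eq_mul] at hjen
  have hcomb : a * ρ₁ / (a * ρ₁ + b * ρ₂) * (u₁ / ρ₁) + b * ρ₂ / (a * ρ₁ + b * ρ₂) * (u₂ / ρ₂)
      = (a * u₁ + b * u₂) / (a * ρ₁ + b * ρ₂) := by field_simp
  rw [hcomb, Real.log_div hu₁.ne' hρ₁.ne', Real.log_div hu₂.ne' hρ₂.ne',
    Real.log_div (by positivity) hR.ne'] at hjen
  have := mul_le_mul_of_nonneg_left hjen hR.le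
  calc a * (ρ₁ * (Real.log u₁ - Real.log ρ₁)) + b * (ρ₂ * (Real.log u₂ - Real.log ρ₂))
      = (a * ρ₁ + b * ρ₂) * (a * ρ₁ / (a * ρ₁ + b * ρ₂) * (Real.log u₁ - Real.log ρ₁)
        + b * ρ₂ / (a * ρ₁ + b * ρ₂) * (Real.log u₂ - Real.log ρ₂)) := by
        field_simp
    _ ≤ _ := this

/-- Log-sum inequality (strict). -/
lemma logsum_lt {ρ₁ ρ₂ u₁ u₂ a b : ℝ} (hρ₁ : 0 < ρ₁) (hρ₂ : 0 < ρ₂)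
    (hu₁ : 0 < u₁) (hu₂ : 0 < u₂) (ha : 0 < a) (hb : 0 < b) (hab : a + b = 1)
    (hne : u₁ * ρ₂ ≠ u₂ * ρ₁) :
    a * (ρ₁ * (Real.log u₁ - Real.log ρ₁)) + b * (ρ₂ * (Real.log u₂ - Real.log ρ₂)) <
      (a * ρ₁ + b * ρ₂) * (Real.log (a * u₁ + b * u₂) - Real.log (a * ρ₁ + b * ρ₂)) := by
  have hR : 0 < a * ρ₁ + b * ρ₂ := by positivity
  have hne' : u₁ / ρ₁ ≠ u₂ / ρ₂ := by
    intro h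
    apply hne
    field_simp at h
    linarith [h]
  have hjen := strictConcaveOn_log_Ioi.2 (Set.mem_Ioi.2 (div_pos hu₁ hρ₁))
    (Set.mem_Ioi.2 (div_pos hu₂ hρ₂)) hne' (by positivity : (0:ℝ) < a * ρ₁ / (a * ρ₁ + b * ρ₂))
    (by positivity : (0:ℝ) < b * ρ₂ / (a * ρ₁ + b * ρ₂)) (by field_simp)
  simp only [smul_eq_mul] at hjen
  have hcomb : a * ρ₁ / (a * ρ₁ + b * ρ₂) * (u₁ / ρ₁) + b * ρ₂ / (a * ρ₁ + b * ρ₂) * (u₂ / ρ₂)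
      = (a * u₁ + b * u₂) / (a * ρ₁ + b * ρ₂) := by field_simp
  rw [hcomb, Real.log_div hu₁.ne' hρ₁.ne', Real.log_div hu₂.ne' hρ₂.ne',
    Real.log_div (by positivity) hR.ne'] at hjen
  have := (mul_lt_mul_iff_right₀ hR).2 hjen
  calc a * (ρ₁ * (Real.log u₁ - Real.log ρ₁)) + b * (ρ₂ * (Real.log u₂ - Real.log ρ₂))
      = (a * ρ₁ + b * ρ₂) * (a * ρ₁ / (a * ρ₁ + b * ρ₂) * (Real.log u₁ - Real.log ρ₁)
        + b * ρ₂ / (a * ρ₁ + b * ρ₂) * (Real.log u₂ - Real.log ρ₂)) := by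
        field_simp
    _ < _ := this

/-- Kinetic energy convexity (with remainder). -/
lemma kinetic_eq {ρ₁ ρ₂ m₁ m₂ a b : ℝ} (hρ₁ : 0 < ρ₁) (hρ₂ : 0 < ρ₂)
    (ha : 0 < a) (hb : 0 < b) :
    a * (m₁ ^ 2 / (2 * ρ₁)) + b * (m₂ ^ 2 / (2 * ρ₂))
      - (a * m₁ + b * m₂) ^ 2 / (2 * (a * ρ₁ + b * ρ₂))
      = a * b * (ρ₂ * m₁ - ρ₁ * m₂) ^ 2 / (2 * ρ₁ * ρ₂ * (a * ρ₁ + b * ρ₂)) := by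
  have hR : 0 < a * ρ₁ + b * ρ₂ := by positivity
  field_simp
  ring

/-- For `γ > 1` and any constant `s₀ ∈ ℝ`, the function `q(w) = (s₀ − s(w))·ρ`
is strictly convex on the open convex set `D = {(ρ, m, E) : ρ > 0, p(w) > 0}`. -/
theorem qf_strictConvex (γ s₀ : ℝ) (hγ : 1 < γ) :
    StrictConvexOn ℝ {w : ℝ × ℝ × ℝ | 0 < w.1 ∧ 0 < press γ w} (qf γ s₀) := by
  have hγ1 : 0 < γ - 1 := by linarith
  -- internal energy
  set u : ℝ × ℝ × ℝ → ℝ := fun w => w.2.2 - w.2.1 ^ 2 / (2 * w.1) with hu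
  have hupos : ∀ w : ℝ × ℝ × ℝ, 0 < press γ w → 0 < u w := by
    intro w hw
    unfold u
    unfold press at hw
    nlinarith
  have hqf : ∀ w : ℝ × ℝ × ℝ, 0 < w.1 → 0 < u w →
      qf γ s₀ w = (s₀ - Real.log (γ - 1)) * w.1
        - w.1 * Real.log (u w) + γ * (w.1 * Real.log w.1) := by
    intro w hw1 hw2
    unfold qf entr press
    rw [Real.log_div (by unfold u at hw2; positivity) (by positivity),
      Real.log_mul hγ1.ne' (by unfold u at hw2; linarith), Real.log_rpow hw1]
    unfold u at *
    ring
  constructor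
  · -- convexity of the set
    intro x hx y hy a b ha hb hab
    obtain ⟨hx1, hx2⟩ := hx
    obtain ⟨hy1, hy2⟩ := hy
    have hux := hupos x hx2
    have huy := hupos y hy2
    rcases ha.eq_or_lt with h | ha'
    · obtain rfl : a = 0 := h.symm
      have hb1 : b = 1 := by linarith
      subst hb1
      simpa using ⟨hy1, hy2⟩
    rcases hb.eq_or_lt with h | hb'
    · obtain rfl : b = 0 := h.symm
      have ha1 : a = 1 := by linarith
      subst ha1
      simpa using ⟨hx1, hx2⟩
    have hz1 : (a • x + b • y).1 = a * x.1 + b * y.1 := rfl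
    have hz21 : (a • x + b • y).2.1 = a * x.2.1 + b * y.2.1 := rfl
    have hz22 : (a • x + b • y).2.2 = a * x.2.2 + b * y.2.2 := rfl
    have hR : 0 < a * x.1 + b * y.1 := by positivity
    have hk := kinetic_eq (m₁ := x.2.1) (m₂ := y.2.1) hx1 hy1 ha' hb'
    have hrem : 0 ≤ a * b * (y.1 * x.2.1 - x.1 * y.2.1) ^ 2
        / (2 * x.1 * y.1 * (a * x.1 + b * y.1)) := by positivity
    have huz : a * u x + b * u y ≤ u (a • x + b • y) := by
      show a * (x.2.2 - x.2.1 ^ 2 / (2 * x.1)) + b * (y.2.2 - y.2.1 ^ 2 / (2 * y.1)) ≤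
        (a • x + b • y).2.2 - (a • x + b • y).2.1 ^ 2 / (2 * (a • x + b • y).1)
      rw [hz1, hz21, hz22]
      nlinarith [hk, hrem]
    constructor
    · show (0:ℝ) < a * x.1 + b * y.1
      exact hR
    · show (0:ℝ) < press γ (a • x + b • y)
      have : press γ (a • x + b • y) = (γ - 1) * u (a • x + b • y) := rfl
      rw [this]
      have hU : (0:ℝ) < a * u x + b * u y := by positivity
      exact mul_pos hγ1 (lt_of_lt_of_le hU huz)
  · -- strict inequality
    intro x hx y hy hxy a b ha hb hab
    obtain ⟨hx1, hx2⟩ := hx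
    obtain ⟨hy1, hy2⟩ := hy
    have hux := hupos x hx2
    have huy := hupos y hy2
    have hz1 : (a • x + b • y).1 = a * x.1 + b * y.1 := rfl
    have hz21 : (a • x + b • y).2.1 = a * x.2.1 + b * y.2.1 := rfl
    have hz22 : (a • x + b • y).2.2 = a * x.2.2 + b * y.2.2 := rfl
    have hR : 0 < a * x.1 + b * y.1 := by positivity
    have hU : (0:ℝ) < a * u x + b * u y := by positivity
    have hk := kinetic_eq (m₁ := x.2.1) (m₂ := y.2.1) hx1 hy1 ha hb
    have hrem : 0 ≤ a * b * (y.1 * x.2.1 - x.1 * y.2.1) ^ 2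
        / (2 * x.1 * y.1 * (a * x.1 + b * y.1)) := by positivity
    have huzeq : u (a • x + b • y) - (a * u x + b * u y)
        = a * b * (y.1 * x.2.1 - x.1 * y.2.1) ^ 2
          / (2 * x.1 * y.1 * (a * x.1 + b * y.1)) := by
      show (a • x + b • y).2.2 - (a • x + b • y).2.1 ^ 2 / (2 * (a • x + b • y).1)
          - (a * (x.2.2 - x.2.1 ^ 2 / (2 * x.1)) + b * (y.2.2 - y.2.1 ^ 2 / (2 * y.1))) = _
      rw [hz1, hz21, hz22]
      linarith [hk]
    have huz : a * u x + b * u y ≤ u (a • x + b • y) := by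
      rw [← sub_nonneg, ← huzeq] at hrem; linarith [hrem]
    have huz0 : 0 < u (a • x + b • y) := lt_of_lt_of_le hU huz
    have hz1pos : 0 < (a • x + b • y).1 := by rw [hz1]; exact hR
    rw [hqf x hx1 hux, hqf y hy1 huy, hqf (a • x + b • y) hz1pos huz0, hz1]
    -- nonstrict pieces
    have P0 : (a * x.1 + b * y.1) * Real.log (a * u x + b * u y)
        ≤ (a * x.1 + b * y.1) * Real.log (u (a • x + b • y)) :=
      mul_le_mul_of_nonneg_left (Real.log_le_log hU huz) hR.le
    have P1 : a * (x.1 * (Real.log (u x) - Real.log x.1))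
        + b * (y.1 * (Real.log (u y) - Real.log y.1)) ≤
        (a * x.1 + b * y.1) * (Real.log (a * u x + b * u y) - Real.log (a * x.1 + b * y.1)) :=
      logsum_le hx1 hy1 hux huy ha hb hab
    have P2 : (a * x.1 + b * y.1) * Real.log (a * x.1 + b * y.1)
        ≤ a * (x.1 * Real.log x.1) + b * (y.1 * Real.log y.1) := by
      have := Real.convexOn_mul_log.2 (Set.mem_Ici.2 hx1.le) (Set.mem_Ici.2 hy1.le)
        ha.le hb.le hab
      simpa using this
    -- case analysis for strictness
    by_cases hv : y.1 * x.2.1 = x.1 * y.2.1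
    · -- equal velocities: the convexity of u is an equality
      by_cases hρ : x.1 = y.1
      · -- equal densities, hence equal momenta, so internal energies differ
        have hm : x.2.1 = y.2.1 := by
          rw [hρ] at hv
          exact mul_left_cancel₀ hy1.ne' hv
        have hE : x.2.2 ≠ y.2.2 := by
          intro hE
          exact hxy (Prod.ext hρ (Prod.ext hm hE))
        have huxy : u x ≠ u y := by
          show x.2.2 - x.2.1 ^ 2 / (2 * x.1) ≠ y.2.2 - y.2.1 ^ 2 / (2 * y.1)
          rw [hρ, hm]
          intro h
          exact hE (by linarith)
        have hne : u x * y.1 ≠ u y * x.1 := by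
          rw [← hρ]
          exact fun h => huxy (mul_right_cancel₀ hx1.ne' h)
        have P1' := logsum_lt hx1 hy1 hux huy ha hb hab hne
        have P2' := mul_le_mul_of_nonneg_left P2 hγ1.le
        simp only [smul_eq_mul]
        linarith [P0, P1', P2']
      · -- densities differ: strict convexity of t ↦ t log t
        have P2s : (a * x.1 + b * y.1) * Real.log (a * x.1 + b * y.1)
            < a * (x.1 * Real.log x.1) + b * (y.1 * Real.log y.1) := by
          have := Real.strictConvexOn_mul_log.2 (Set.mem_Ici.2 hx1.le) (Set.mem_Ici.2 hy1.le)
            hρ ha hb hab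
          simpa using this
        have P2' := mul_lt_mul_of_pos_left P2s hγ1
        simp only [smul_eq_mul]
        linarith [P0, P1, P2']
    · -- velocities differ: u is strictly above the chord
      have hremp : 0 < a * b * (y.1 * x.2.1 - x.1 * y.2.1) ^ 2
          / (2 * x.1 * y.1 * (a * x.1 + b * y.1)) := by
        have : y.1 * x.2.1 - x.1 * y.2.1 ≠ 0 := sub_ne_zero.2 hv
        positivity
      have huzs : a * u x + b * u y < u (a • x + b • y) := by
        rw [← sub_pos, huzeq]; exact hremp
      have P0' : (a * x.1 + b * y.1) * Real.log (a * u x + b * u y)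
          < (a * x.1 + b * y.1) * Real.log (u (a • x + b • y)) :=
        mul_lt_mul_of_pos_left (Real.log_lt_log hU huzs) hR
      have P2' := mul_le_mul_of_nonneg_left P2 hγ1.le
      simp only [smul_eq_mul]
      linarith [P0', P1, P2']
end

section
/- For γ > 1, s₀ ∈ ℝ and ε ≥ 0, the set of admissible states Σ^ε = {w = (ρ, m, E) ∈ ℝ³ : ρ ≥ ε, p(w) ≥ ε, q(w) ≤ 0} is a convex subset of ℝ³ whenever ε > 0 (and likewise Σ = {w : ρ > 0, p(w) > 0, q(w) ≤ 0} is convex), as a consequence of the concavity of p and the convexity of q on {ρ > 0, p > 0}. -/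
open Real MeasureTheory

/-- Concavity inequality for the kinetic term. -/
lemma kinetic_ineq (m₁ m₂ ρ₁ ρ₂ a b : ℝ) (hρ₁ : 0 < ρ₁) (hρ₂ : 0 < ρ₂)
    (ha : 0 ≤ a) (hb : 0 ≤ b) (hρt : 0 < a * ρ₁ + b * ρ₂) :
    (a * m₁ + b * m₂) ^ 2 / (2 * (a * ρ₁ + b * ρ₂)) ≤
      a * (m₁ ^ 2 / (2 * ρ₁)) + b * (m₂ ^ 2 / (2 * ρ₂)) := by
  have e1 : a * (m₁ ^ 2 / (2 * ρ₁)) + b * (m₂ ^ 2 / (2 * ρ₂)) =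
      (a * m₁ ^ 2 * (2 * ρ₂) + b * m₂ ^ 2 * (2 * ρ₁)) / ((2 * ρ₁) * (2 * ρ₂)) := by
    field_simp
  rw [e1, div_le_div_iff₀ (by positivity) (by positivity)]
  nlinarith [mul_nonneg (mul_nonneg ha hb) (sq_nonneg (m₁ * ρ₂ - m₂ * ρ₁)),
    mul_pos hρ₁ hρ₂]

/-- Concavity of pressure along a segment. -/
lemma press_concave (γ : ℝ) (hγ : 1 < γ) (x y : ℝ × ℝ × ℝ) (a b : ℝ)
    (hx : 0 < x.1) (hy : 0 < y.1) (ha : 0 ≤ a) (hb : 0 ≤ b) (hab : a + b = 1) :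
    a * press γ x + b * press γ y ≤ press γ (a • x + b • y) := by
  have hγ' : (0:ℝ) ≤ γ - 1 := by linarith
  have hρt : 0 < a * x.1 + b * y.1 := by
    rcases eq_or_lt_of_le ha with ha' | ha'
    · rw [← ha'] at hab ⊢; simp at hab; nlinarith
    · nlinarith [mul_nonneg hb hy.le]
  have h := kinetic_ineq x.2.1 y.2.1 x.1 y.1 a b hx hy ha hb hρt
  simp only [press, Prod.smul_fst, Prod.smul_snd, Prod.fst_add, Prod.snd_add,
    smul_eq_mul]
  nlinarith [h]

/-- From `q(w) ≤ 0` with positive density and pressure, `p(w) ≥ e^{s₀} ρ^γ`. -/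
lemma qf_nonpos_iff (γ s₀ : ℝ) (w : ℝ × ℝ × ℝ) (hρ : 0 < w.1) (hp : 0 < press γ w)
    (hq : qf γ s₀ w ≤ 0) : Real.exp s₀ * w.1 ^ γ ≤ press γ w := by
  have hpow : (0:ℝ) < w.1 ^ γ := Real.rpow_pos_of_pos hρ γ
  have hs : s₀ ≤ entr γ w := by
    by_contra h
    push_neg at h
    have : 0 < (s₀ - entr γ w) * w.1 := mul_pos (by linarith) hρ
    exact absurd hq (by simpa [qf] using this.not_ge)
  have hdiv : 0 < press γ w / w.1 ^ γ := div_pos hp hpow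
  have := Real.exp_le_exp.2 hs
  rw [entr, Real.exp_log hdiv] at this
  calc Real.exp s₀ * w.1 ^ γ ≤ press γ w / w.1 ^ γ * w.1 ^ γ := by
        exact mul_le_mul_of_nonneg_right this hpow.le
    _ = press γ w := by field_simp

lemma qf_of_lower (γ s₀ : ℝ) (hγ : 1 < γ) (w : ℝ × ℝ × ℝ) (hρ : 0 < w.1)
    (hlow : Real.exp s₀ * w.1 ^ γ ≤ press γ w) : qf γ s₀ w ≤ 0 := by
  have hpow : (0:ℝ) < w.1 ^ γ := Real.rpow_pos_of_pos hρ γ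
  have hp : 0 < press γ w := lt_of_lt_of_le (by positivity) hlow
  have hs : s₀ ≤ entr γ w := by
    rw [entr]
    rw [← Real.log_exp s₀]
    apply Real.log_le_log (Real.exp_pos _)
    rw [le_div_iff₀ hpow]
    exact hlow
  have : (s₀ - entr γ w) * w.1 ≤ 0 :=
    mul_nonpos_of_nonpos_of_nonneg (by linarith) hρ.le
  simpa [qf] using this

/-- Main segment lemma. -/
lemma segment_lemma (γ s₀ : ℝ) (hγ : 1 < γ) (x y : ℝ × ℝ × ℝ) (a b : ℝ)
    (hx : 0 < x.1) (hy : 0 < y.1) (hxp : 0 < press γ x) (hyp : 0 < press γ y)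
    (hxq : qf γ s₀ x ≤ 0) (hyq : qf γ s₀ y ≤ 0)
    (ha : 0 ≤ a) (hb : 0 ≤ b) (hab : a + b = 1) :
    a * press γ x + b * press γ y ≤ press γ (a • x + b • y) ∧
      qf γ s₀ (a • x + b • y) ≤ 0 := by
  have hpr := press_concave γ hγ x y a b hx hy ha hb hab
  refine ⟨hpr, ?_⟩
  have hρt : 0 < (a • x + b • y).1 := by
    have : (a • x + b • y).1 = a * x.1 + b * y.1 := rfl
    rw [this]
    rcases eq_or_lt_of_le ha with ha' | ha'
    · rw [← ha'] at hab ⊢; simp at hab; nlinarith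
    · nlinarith [mul_nonneg hb hy.le]
  apply qf_of_lower γ s₀ hγ _ hρt
  have hrpow : ((a • x + b • y).1) ^ γ ≤ a * x.1 ^ γ + b * y.1 ^ γ := by
    have := (convexOn_rpow (le_of_lt hγ)).2 (Set.mem_Ici.2 hx.le) (Set.mem_Ici.2 hy.le)
      ha hb hab
    simpa [smul_eq_mul] using this
  have h1 := qf_nonpos_iff γ s₀ x hx hxp hxq
  have h2 := qf_nonpos_iff γ s₀ y hy hyp hyq
  have hexp : (0:ℝ) < Real.exp s₀ := Real.exp_pos _
  calc Real.exp s₀ * (a • x + b • y).1 ^ γ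
      ≤ Real.exp s₀ * (a * x.1 ^ γ + b * y.1 ^ γ) :=
        mul_le_mul_of_nonneg_left hrpow hexp.le
    _ = a * (Real.exp s₀ * x.1 ^ γ) + b * (Real.exp s₀ * y.1 ^ γ) := by ring
    _ ≤ a * press γ x + b * press γ y := by
        exact add_le_add (mul_le_mul_of_nonneg_left h1 ha) (mul_le_mul_of_nonneg_left h2 hb)
    _ ≤ press γ (a • x + b • y) := hpr

/-- For `γ > 1`, `s₀ ∈ ℝ` and `ε > 0`, the set of admissible states
`Σ^ε = {w : ρ ≥ ε, p(w) ≥ ε, q(w) ≤ 0}` is a convex subset of `ℝ³`, and likewise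
`Σ = {w : ρ > 0, p(w) > 0, q(w) ≤ 0}` is convex. -/
theorem admissible_set_convex (γ s₀ ε : ℝ) (hγ : 1 < γ) (hε : 0 < ε) :
    Convex ℝ {w : ℝ × ℝ × ℝ | ε ≤ w.1 ∧ ε ≤ press γ w ∧ qf γ s₀ w ≤ 0} ∧
    Convex ℝ {w : ℝ × ℝ × ℝ | 0 < w.1 ∧ 0 < press γ w ∧ qf γ s₀ w ≤ 0} := by
  constructor
  · intro x hx y hy a b ha hb hab
    obtain ⟨hx1, hx2, hx3⟩ := hx
    obtain ⟨hy1, hy2, hy3⟩ := hy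
    have hx1' : 0 < x.1 := lt_of_lt_of_le hε hx1
    have hy1' : 0 < y.1 := lt_of_lt_of_le hε hy1
    have hx2' : 0 < press γ x := lt_of_lt_of_le hε hx2
    have hy2' : 0 < press γ y := lt_of_lt_of_le hε hy2
    obtain ⟨hp, hq⟩ := segment_lemma γ s₀ hγ x y a b hx1' hy1' hx2' hy2' hx3 hy3 ha hb hab
    refine ⟨?_, ?_, hq⟩
    · have : (a • x + b • y).1 = a * x.1 + b * y.1 := rfl
      rw [this]
      nlinarith [mul_le_mul_of_nonneg_left hx1 ha, mul_le_mul_of_nonneg_left hy1 hb]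
    · nlinarith [mul_le_mul_of_nonneg_left hx2 ha, mul_le_mul_of_nonneg_left hy2 hb]
  · intro x hx y hy a b ha hb hab
    obtain ⟨hx1, hx2, hx3⟩ := hx
    obtain ⟨hy1, hy2, hy3⟩ := hy
    obtain ⟨hp, hq⟩ := segment_lemma γ s₀ hγ x y a b hx1 hy1 hx2 hy2 hx3 hy3 ha hb hab
    refine ⟨?_, ?_, hq⟩
    · have : (a • x + b • y).1 = a * x.1 + b * y.1 := rfl
      rw [this]
      rcases eq_or_lt_of_le ha with ha' | ha'
      · rw [← ha'] at hab ⊢; simp at hab ⊢; nlinarith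
      · nlinarith [mul_nonneg hb hy1.le]
    · calc (0:ℝ) < a * press γ x + b * press γ y := by
            rcases eq_or_lt_of_le ha with ha' | ha'
            · rw [← ha'] at hab ⊢; simp at hab ⊢; nlinarith
            · nlinarith [mul_nonneg hb hy2.le]
        _ ≤ _ := hp
end

section
/- (Pressure part of Theorem 1(ii).) Let γ > 1, ε > 0, let I ⊂ ℝ be a compact interval of positive length, and let w_h : I → ℝ³ be continuous with ρ_h(x) > 0 for all x ∈ I. Suppose the average w̄_h satisfies ρ̄_h > 0 and p(w̄_h) > ε, and that p_min := min_{x∈I} p(w_h(x)) < p(w̄_h). Set θ₂ = (p(w̄_h) − ε)/(p(w̄_h) − p_min). Then for every θ with 0 ≤ θ ≤ min{1, θ₂}, the reconstruction w̃_h(x) = θ·w_h(x) + (1 − θ)·w̄_h satisfies p(w̃_h(x)) ≥ ε for all x ∈ I. -/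
open Real MeasureTheory

/-- Pressure part of Theorem 1(ii): Under positivity of the density along
the cell, with `p(w̄_h) > ε` and `p_min < p(w̄_h)`, setting
`θ₂ = (p(w̄_h) − ε)/(p(w̄_h) − p_min)`, the reconstruction
`w̃_h(x) = θ·w_h(x) + (1 − θ)·w̄_h` satisfies `p(w̃_h(x)) ≥ ε` on `I` whenever
`0 ≤ θ ≤ min{1, θ₂}`. -/
theorem limited_pressure_bound (γ ε a b : ℝ) (hγ : 1 < γ) (hε : 0 < ε) (hab : a < b)
    (wh : ℝ → ℝ × ℝ × ℝ) (hwc : ContinuousOn wh (Set.Icc a b))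
    (hρ : ∀ x ∈ Set.Icc a b, 0 < (wh x).1)
    (wbar : ℝ × ℝ × ℝ) (hwbar : wbar = (b - a)⁻¹ • ∫ x in a..b, wh x)
    (hρbar : 0 < wbar.1)
    (pmin θ₂ : ℝ)
    (hpmin : pmin = sInf ((fun x => press γ (wh x)) '' Set.Icc a b))
    (h1 : ε < press γ wbar) (h2 : pmin < press γ wbar)
    (hθ₂ : θ₂ = (press γ wbar - ε) / (press γ wbar - pmin))
    (θ : ℝ) (hθ0 : 0 ≤ θ) (hθ : θ ≤ min 1 θ₂) :
    ∀ x ∈ Set.Icc a b, ε ≤ press γ (θ • wh x + (1 - θ) • wbar) := by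

  intro x hx
  have hθ1 : θ ≤ 1 := hθ.trans (min_le_left _ _)
  have hθθ₂ : θ ≤ θ₂ := hθ.trans (min_le_right _ _)
  have hρx : 0 < (wh x).1 := hρ x hx
  -- continuity of pressure along the cell and lower bound by pmin
  have hc : ContinuousOn (fun x => press γ (wh x)) (Set.Icc a b) := by
    unfold press
    apply ContinuousOn.mul continuousOn_const
    apply ContinuousOn.sub (hwc.snd.snd)
    apply ContinuousOn.div (hwc.snd.fst.pow 2) (continuousOn_const.mul hwc.fst)
    intro y hy
    have := hρ y hy
    exact mul_ne_zero two_ne_zero this.ne'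
  have hbdd : BddBelow ((fun x => press γ (wh x)) '' Set.Icc a b) :=
    ((isCompact_Icc.image_of_continuousOn hc)).bddBelow
  have hpminle : pmin ≤ press γ (wh x) := by
    rw [hpmin]
    exact csInf_le hbdd ⟨x, hx, rfl⟩
  -- the mixed density is positive
  have hρmix : 0 < θ * (wh x).1 + (1 - θ) * wbar.1 := by
    rcases eq_or_lt_of_le hθ0 with h | h
    · simp [← h]; linarith
    · have : 0 ≤ (1 - θ) * wbar.1 := mul_nonneg (by linarith) hρbar.le
      nlinarith
  -- concavity inequality
  have hconc : θ * press γ (wh x) + (1 - θ) * press γ wbar ≤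
      press γ (θ • wh x + (1 - θ) • wbar) := by
    set m1 := (wh x).2.1; set E1 := (wh x).2.2; set r1 := (wh x).1
    set m2 := wbar.2.1; set E2 := wbar.2.2; set r2 := wbar.1
    have hmix : (θ • wh x + (1 - θ) • wbar) =
        (θ * r1 + (1 - θ) * r2, θ * m1 + (1 - θ) * m2, θ * E1 + (1 - θ) * E2) := by
      simp [Prod.ext_iff, Prod.smul_def, smul_eq_mul]; exact ⟨rfl, rfl, rfl⟩
    rw [hmix]
    unfold press
    simp only
    have hkey : (θ * m1 + (1 - θ) * m2) ^ 2 / (2 * (θ * r1 + (1 - θ) * r2)) ≤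
        θ * (m1 ^ 2 / (2 * r1)) + (1 - θ) * (m2 ^ 2 / (2 * r2)) := by
      rw [div_le_iff₀ (by positivity), ← mul_div_assoc, ← mul_div_assoc, div_add_div _ _ (by positivity : (2:ℝ)*r1 ≠ 0)
        (by positivity : (2:ℝ)*r2 ≠ 0), div_mul_eq_mul_div, le_div_iff₀ (by positivity)]
      nlinarith [sq_nonneg (m1 * r2 - m2 * r1), mul_nonneg hθ0 (sub_nonneg.2 hθ1),
        mul_pos hρx hρbar, hρmix]
    have hγ1 : (0:ℝ) ≤ γ - 1 := by linarith
    have := mul_le_mul_of_nonneg_left (sub_le_sub_left hkey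
      (θ * E1 + (1 - θ) * E2)) hγ1
    calc θ * ((γ - 1) * (E1 - m1 ^ 2 / (2 * r1))) +
          (1 - θ) * ((γ - 1) * (E2 - m2 ^ 2 / (2 * r2)))
        = (γ - 1) * ((θ * E1 + (1 - θ) * E2) -
            (θ * (m1 ^ 2 / (2 * r1)) + (1 - θ) * (m2 ^ 2 / (2 * r2)))) := by ring
      _ ≤ (γ - 1) * ((θ * E1 + (1 - θ) * E2) -
            (θ * m1 + (1 - θ) * m2) ^ 2 / (2 * (θ * r1 + (1 - θ) * r2))) := this
  -- combine
  have hd : 0 < press γ wbar - pmin := by linarith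
  have hθ₂' : θ * (press γ wbar - pmin) ≤ press γ wbar - ε := by
    rw [hθ₂] at hθθ₂
    exact (le_div_iff₀ hd).mp hθθ₂
  have h3 : ε ≤ θ * pmin + (1 - θ) * press γ wbar := by nlinarith
  have h4 : θ * pmin + (1 - θ) * press γ wbar ≤
      θ * press γ (wh x) + (1 - θ) * press γ wbar := by
    have := mul_le_mul_of_nonneg_left hpminle hθ0
    linarith
  linarith
end

section
/- (Entropy part of Theorem 1(ii).) Let γ > 1, s₀ ∈ ℝ, let I ⊂ ℝ be a compact interval of positive length, and let w_h : I → ℝ³ be continuous with ρ_h(x) > 0 and p(w_h(x)) > 0 for all x ∈ I. Suppose the average w̄_h satisfies ρ̄_h > 0, p(w̄_h) > 0, q(w̄_h) < 0, and q_max := max_{x∈I} q(w_h(x)) > q(w̄_h). Set θ₃ = (−q(w̄_h))/(q_max − q(w̄_h)). Then for every θ with 0 ≤ θ ≤ min{1, θ₃}, the reconstruction w̃_h(x) = θ·w_h(x) + (1 − θ)·w̄_h satisfies q(w̃_h(x)) ≤ 0 for all x ∈ I. -/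
open Real MeasureTheory

section Aux

lemma comb_pos (l m x y : ℝ) (hl : 0 ≤ l) (hm : 0 ≤ m) (hlm : l + m = 1)
    (hx : 0 < x) (hy : 0 < y) : 0 < l*x + m*y := by
  rcases hl.eq_or_lt with h | h
  · have hm1 : m = 1 := by linarith
    simp [← h, hm1, hy]
  · have : 0 < l*x := mul_pos h hx
    nlinarith [mul_nonneg hm hy.le]

/-- Convexity of the kinetic-energy term `m²/(2ρ)`. -/
lemma kin_conv (l m : ℝ) (hl : 0 ≤ l) (hm : 0 ≤ m) (hlm : l + m = 1)
    (m₁ m₂ ρ₁ ρ₂ : ℝ) (h1 : 0 < ρ₁) (h2 : 0 < ρ₂) :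
    (l*m₁ + m*m₂)^2 / (2*(l*ρ₁ + m*ρ₂)) ≤ l*(m₁^2/(2*ρ₁)) + m*(m₂^2/(2*ρ₂)) := by
  have hρ : 0 < l*ρ₁ + m*ρ₂ := comb_pos l m ρ₁ ρ₂ hl hm hlm h1 h2
  rw [div_le_iff₀ (by positivity)]
  have h : l*(m₁^2/(2*ρ₁)) + m*(m₂^2/(2*ρ₂)) = (l*(m₁^2*ρ₂) + m*(m₂^2*ρ₁))/(2*(ρ₁*ρ₂)) := by
    field_simp
  rw [h, div_mul_eq_mul_div, le_div_iff₀ (by positivity)]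
  nlinarith [sq_nonneg (m₁*ρ₂ - m₂*ρ₁), mul_nonneg hl hm, sq_nonneg (m₁ - m₂)]

/-- Joint convexity of the perspective function `ρ (log ρ − log e)` (log-sum inequality). -/
lemma persp_conv (l m : ℝ) (hl : 0 ≤ l) (hm : 0 ≤ m) (hlm : l + m = 1)
    (ρ₁ ρ₂ e₁ e₂ : ℝ) (hρ1 : 0 < ρ₁) (hρ2 : 0 < ρ₂) (he1 : 0 < e₁) (he2 : 0 < e₂) :
    (l*ρ₁ + m*ρ₂) * (log (l*ρ₁ + m*ρ₂) - log (l*e₁ + m*e₂)) ≤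
      l*(ρ₁*(log ρ₁ - log e₁)) + m*(ρ₂*(log ρ₂ - log e₂)) := by
  set e := l*e₁ + m*e₂ with hedef
  set ρ := l*ρ₁ + m*ρ₂ with hρdef
  have he : 0 < e := comb_pos l m e₁ e₂ hl hm hlm he1 he2
  have hρ : 0 < ρ := comb_pos l m ρ₁ ρ₂ hl hm hlm hρ1 hρ2
  have key := Real.convexOn_mul_log.2 (Set.mem_Ici.2 (le_of_lt (div_pos hρ1 he1)))
    (Set.mem_Ici.2 (le_of_lt (div_pos hρ2 he2)))
    (show (0:ℝ) ≤ l*e₁/e by positivity) (show (0:ℝ) ≤ m*e₂/e by positivity)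
    (show l*e₁/e + m*e₂/e = 1 by field_simp; exact hedef.symm)
  simp only [smul_eq_mul] at key
  have hc1 : l*e₁/e * (ρ₁/e₁) = l*ρ₁/e := by field_simp
  have hc2 : m*e₂/e * (ρ₂/e₂) = m*ρ₂/e := by field_simp
  rw [hc1, hc2] at key
  have hsum : l*ρ₁/e + m*ρ₂/e = ρ/e := by rw [hρdef]; ring
  rw [hsum] at key
  have key2 := mul_le_mul_of_nonneg_left key he.le
  rw [Real.log_div hρ.ne' he.ne', Real.log_div hρ1.ne' he1.ne',
    Real.log_div hρ2.ne' he2.ne'] at key2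
  calc ρ * (log ρ - log e) = e * (ρ/e * (log ρ - log e)) := by field_simp
    _ ≤ e * (l*e₁/e * (ρ₁/e₁ * (log ρ₁ - log e₁)) + m*e₂/e * (ρ₂/e₂ * (log ρ₂ - log e₂))) := key2
    _ = l*(ρ₁*(log ρ₁ - log e₁)) + m*(ρ₂*(log ρ₂ - log e₂)) := by field_simp

/-- Convexity of `ρ log ρ`. -/
lemma mullog_conv (l m : ℝ) (hl : 0 ≤ l) (hm : 0 ≤ m) (hlm : l + m = 1)
    (ρ₁ ρ₂ : ℝ) (hρ1 : 0 < ρ₁) (hρ2 : 0 < ρ₂) :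
    (l*ρ₁ + m*ρ₂) * log (l*ρ₁ + m*ρ₂) ≤ l*(ρ₁*log ρ₁) + m*(ρ₂*log ρ₂) := by
  have key := Real.convexOn_mul_log.2 (Set.mem_Ici.2 hρ1.le) (Set.mem_Ici.2 hρ2.le) hl hm hlm
  simpa [smul_eq_mul, mul_assoc] using key

lemma epos (γ : ℝ) (hγ : 1 < γ) (w : ℝ × ℝ × ℝ) (hp : 0 < press γ w) :
    0 < w.2.2 - w.2.1^2/(2*w.1) := by
  have hg : (0:ℝ) < γ - 1 := by linarith
  unfold press at hp
  by_contra h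
  push_neg at h
  nlinarith

lemma qf_eq (γ s₀ : ℝ) (hγ : 1 < γ) (w : ℝ × ℝ × ℝ) (hρ : 0 < w.1)
    (hp : 0 < press γ w) :
    qf γ s₀ w = s₀*w.1 - w.1*Real.log (γ-1)
      + w.1*(log w.1 - log (w.2.2 - w.2.1^2/(2*w.1))) + (γ-1)*(w.1*log w.1) := by
  have hg : (0:ℝ) < γ - 1 := by linarith
  have he := epos γ hγ w hp
  unfold qf entr press
  rw [Real.log_div (by positivity) (Real.rpow_pos_of_pos hρ γ).ne',
    Real.log_mul hg.ne' he.ne', Real.log_rpow hρ]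
  ring

/-- Convexity-type estimate for `qf` along a segment of admissible states. -/
lemma qf_comb (γ s₀ : ℝ) (hγ : 1 < γ) (u v : ℝ × ℝ × ℝ) (hu1 : 0 < u.1) (hv1 : 0 < v.1)
    (hup : 0 < press γ u) (hvp : 0 < press γ v) (l m : ℝ) (hl : 0 ≤ l) (hm : 0 ≤ m)
    (hlm : l + m = 1) :
    qf γ s₀ (l • u + m • v) ≤ l * qf γ s₀ u + m * qf γ s₀ v := by
  obtain ⟨ρ₁, m₁, E₁⟩ := u
  obtain ⟨ρ₂, m₂, E₂⟩ := v
  simp only [Prod.smul_mk, Prod.mk_add_mk, smul_eq_mul] at *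
  have hg : (0:ℝ) < γ - 1 := by linarith
  have he1 : 0 < E₁ - m₁^2/(2*ρ₁) := epos γ hγ (ρ₁, m₁, E₁) hup
  have he2 : 0 < E₂ - m₂^2/(2*ρ₂) := epos γ hγ (ρ₂, m₂, E₂) hvp
  set e₁ := E₁ - m₁^2/(2*ρ₁)
  set e₂ := E₂ - m₂^2/(2*ρ₂)
  have hρ : 0 < l*ρ₁ + m*ρ₂ := comb_pos l m ρ₁ ρ₂ hl hm hlm hu1 hv1
  have he : 0 < l*e₁ + m*e₂ := comb_pos l m e₁ e₂ hl hm hlm he1 he2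
  have hkin := kin_conv l m hl hm hlm m₁ m₂ ρ₁ ρ₂ hu1 hv1
  have hew : l*e₁ + m*e₂ ≤ (l*E₁ + m*E₂) - (l*m₁ + m*m₂)^2/(2*(l*ρ₁ + m*ρ₂)) := by
    have : l*e₁ + m*e₂ = (l*E₁ + m*E₂) - (l*(m₁^2/(2*ρ₁)) + m*(m₂^2/(2*ρ₂))) := by
      simp only [e₁, e₂]; ring
    linarith
  have hpw : 0 < press γ ((l*ρ₁ + m*ρ₂), (l*m₁ + m*m₂), (l*E₁ + m*E₂)) := by
    unfold press
    exact mul_pos hg (he.trans_le hew)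
  rw [qf_eq γ s₀ hγ _ hρ hpw, qf_eq γ s₀ hγ _ hu1 hup, qf_eq γ s₀ hγ _ hv1 hvp]
  simp only
  have hlog : Real.log (l*e₁ + m*e₂) ≤
      Real.log ((l*E₁ + m*E₂) - (l*m₁ + m*m₂)^2/(2*(l*ρ₁ + m*ρ₂))) :=
    Real.log_le_log he hew
  have step1 : (l*ρ₁ + m*ρ₂) * (log (l*ρ₁ + m*ρ₂)
      - log ((l*E₁ + m*E₂) - (l*m₁ + m*m₂)^2/(2*(l*ρ₁ + m*ρ₂))))
      ≤ (l*ρ₁ + m*ρ₂) * (log (l*ρ₁ + m*ρ₂) - log (l*e₁ + m*e₂)) := by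
    apply mul_le_mul_of_nonneg_left _ hρ.le
    linarith
  have step2 := persp_conv l m hl hm hlm ρ₁ ρ₂ e₁ e₂ hu1 hv1 he1 he2
  have step3 := mul_le_mul_of_nonneg_left (mullog_conv l m hl hm hlm ρ₁ ρ₂ hu1 hv1) hg.le
  nlinarith [step1, step2, step3]

end Aux

/-- Entropy part of Theorem 1(ii): Under positivity of density and
pressure along the cell, with `q(w̄_h) < 0` and `q_max > q(w̄_h)`, setting
`θ₃ = (−q(w̄_h))/(q_max − q(w̄_h))`, the reconstruction
`w̃_h(x) = θ·w_h(x) + (1 − θ)·w̄_h` satisfies `q(w̃_h(x)) ≤ 0` on `I` whenever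
`0 ≤ θ ≤ min{1, θ₃}`. -/
theorem limited_entropy_bound (γ s₀ a b : ℝ) (hγ : 1 < γ) (hab : a < b)
    (wh : ℝ → ℝ × ℝ × ℝ) (hwc : ContinuousOn wh (Set.Icc a b))
    (hρ : ∀ x ∈ Set.Icc a b, 0 < (wh x).1)
    (hp : ∀ x ∈ Set.Icc a b, 0 < press γ (wh x))
    (wbar : ℝ × ℝ × ℝ) (hwbar : wbar = (b - a)⁻¹ • ∫ x in a..b, wh x)
    (hρbar : 0 < wbar.1) (hpbar : 0 < press γ wbar)
    (qmax θ₃ : ℝ)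
    (hqmax : qmax = sSup ((fun x => qf γ s₀ (wh x)) '' Set.Icc a b))
    (h1 : qf γ s₀ wbar < 0) (h2 : qf γ s₀ wbar < qmax)
    (hθ₃ : θ₃ = (-qf γ s₀ wbar) / (qmax - qf γ s₀ wbar))
    (θ : ℝ) (hθ0 : 0 ≤ θ) (hθ : θ ≤ min 1 θ₃) :
    ∀ x ∈ Set.Icc a b, qf γ s₀ (θ • wh x + (1 - θ) • wbar) ≤ 0 := by
  have hθ1 : θ ≤ 1 := hθ.trans (min_le_left _ _)
  have hθθ₃ : θ ≤ θ₃ := hθ.trans (min_le_right _ _)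
  -- continuity of qf ∘ wh on the cell
  have hcρ : ContinuousOn (fun x => (wh x).1) (Set.Icc a b) := hwc.fst
  have hcm : ContinuousOn (fun x => (wh x).2.1) (Set.Icc a b) := hwc.snd.fst
  have hcE : ContinuousOn (fun x => (wh x).2.2) (Set.Icc a b) := hwc.snd.snd
  have hcpress : ContinuousOn (fun x => press γ (wh x)) (Set.Icc a b) := by
    unfold press
    exact continuousOn_const.mul (hcE.sub ((hcm.pow 2).div
      (continuousOn_const.mul hcρ) (fun x hx => by have := hρ x hx; positivity)))
  have hcq : ContinuousOn (fun x => qf γ s₀ (wh x)) (Set.Icc a b) := by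
    unfold qf entr
    refine (continuousOn_const.sub (ContinuousOn.log
      (hcpress.div (hcρ.rpow_const (fun x hx => Or.inl (hρ x hx).ne')) ?_) ?_)).mul hcρ
    · exact fun x hx => (Real.rpow_pos_of_pos (hρ x hx) γ).ne'
    · exact fun x hx => (div_pos (hp x hx) (Real.rpow_pos_of_pos (hρ x hx) γ)).ne'
  have hbdd : BddAbove ((fun x => qf γ s₀ (wh x)) '' Set.Icc a b) :=
    (isCompact_Icc.image_of_continuousOn hcq).bddAbove
  intro x hx
  have hle : qf γ s₀ (wh x) ≤ qmax := by
    rw [hqmax]; exact le_csSup hbdd ⟨x, hx, rfl⟩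
  have key := qf_comb γ s₀ hγ (wh x) wbar (hρ x hx) hρbar (hp x hx) hpbar θ (1 - θ)
    hθ0 (by linarith) (by ring)
  have hd : 0 < qmax - qf γ s₀ wbar := by linarith
  have hθd : θ * (qmax - qf γ s₀ wbar) ≤ -qf γ s₀ wbar := by
    rw [← le_div_iff₀ hd]; rw [hθ₃] at hθθ₃; exact hθθ₃
  have h3 : θ * qf γ s₀ (wh x) ≤ θ * qmax := mul_le_mul_of_nonneg_left hle hθ0
  nlinarith [key]
end

section
/- (Discrete mean–deviation bound, Step 3 of the proof of Theorem 1(iii), Lemma attributed to M. Ainsworth.) Let N ≥ 1, let ŵ₁, …, ŵ_N be strictly positive weights with Σ_{α=1}^{N} ŵ_α = 1, let f₁, …, f_N ∈ ℝ, and set f̄ = Σ_{α=1}^{N} ŵ_α f_α. Then max_{1 ≤ α ≤ N} |f̄ − f_α| ≤ C₃ · (f̄ − min_{1 ≤ α ≤ N} f_α), where C₃ = max{ 1, (1 − min_α ŵ_α)/(min_α ŵ_α) }. -/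
/-- Discrete mean–deviation bound, Step 3 of the proof of Theorem 1(iii),
attributed to M. Ainsworth: For strictly positive weights `ŵ_α` summing to `1` and reals
`f_α` with weighted mean `f̄ = Σ_α ŵ_α f_α`, one has
`max_α |f̄ − f_α| ≤ C₃ · (f̄ − min_α f_α)` where
`C₃ = max{1, (1 − min_α ŵ_α)/(min_α ŵ_α)}`. -/
theorem discrete_mean_deviation_bound (N : ℕ) (hN : 1 ≤ N)
    (w f : Fin N → ℝ)
    (hw : ∀ α, 0 < w α) (hsum : ∑ α, w α = 1)
    (fbar wmin fmin C₃ : ℝ)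
    (hfbar : fbar = ∑ α, w α * f α)
    (hwmin : wmin = sInf (Set.range w))
    (hfmin : fmin = sInf (Set.range f))
    (hC : C₃ = max 1 ((1 - wmin) / wmin)) :
    sSup (Set.range fun α => |fbar - f α|) ≤ C₃ * (fbar - fmin) := by
  haveI : Nonempty (Fin N) := ⟨⟨0, hN⟩⟩
  have hfmin_le : ∀ α, fmin ≤ f α := by
    intro α
    rw [hfmin]
    exact csInf_le (Set.finite_range f).bddBelow ⟨α, rfl⟩
  have hwmin_le : ∀ α, wmin ≤ w α := by
    intro α
    rw [hwmin]
    exact csInf_le (Set.finite_range w).bddBelow ⟨α, rfl⟩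
  have hwmin_pos : 0 < wmin := by
    have := (Set.range_nonempty w).csInf_mem (Set.finite_range w)
    obtain ⟨α, hα⟩ := this
    rw [hwmin, ← hα]; exact hw α
  -- fbar ≥ fmin
  have hfbar_ge : fmin ≤ fbar := by
    rw [hfbar]
    calc fmin = ∑ α, w α * fmin := by rw [← Finset.sum_mul, hsum, one_mul]
    _ ≤ ∑ α, w α * f α :=
      Finset.sum_le_sum fun α _ => mul_le_mul_of_nonneg_left (hfmin_le α) (hw α).le
  have hCge1 : 1 ≤ C₃ := by rw [hC]; exact le_max_left _ _
  have hCge : (1 - wmin) / wmin ≤ C₃ := by rw [hC]; exact le_max_right _ _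
  -- key: for each α, fbar ≥ w α * f α + (1 - w α) * fmin
  have hkey : ∀ α, w α * f α + (1 - w α) * fmin ≤ fbar := by
    intro α
    have hsplit : fbar = w α * f α + ∑ β ∈ Finset.univ.erase α, w β * f β := by
      rw [hfbar, ← Finset.add_sum_erase _ _ (Finset.mem_univ α)]
    have hwsplit : ∑ β ∈ Finset.univ.erase α, w β = 1 - w α := by
      have := Finset.add_sum_erase Finset.univ w (Finset.mem_univ α)
      rw [hsum] at this; linarith
    have : (1 - w α) * fmin ≤ ∑ β ∈ Finset.univ.erase α, w β * f β := by
      rw [← hwsplit, Finset.sum_mul]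
      exact Finset.sum_le_sum fun β _ =>
        mul_le_mul_of_nonneg_left (hfmin_le β) (hw β).le
    linarith [hsplit]
  apply csSup_le (Set.range_nonempty _)
  rintro x ⟨α, rfl⟩
  simp only
  rcases le_or_gt (f α) fbar with h | h
  · rw [abs_of_nonneg (by linarith)]
    calc fbar - f α ≤ fbar - fmin := by linarith [hfmin_le α]
    _ = 1 * (fbar - fmin) := (one_mul _).symm
    _ ≤ C₃ * (fbar - fmin) := by
        apply mul_le_mul_of_nonneg_right hCge1; linarith
  · rw [abs_of_neg (by linarith)]
    have h1 : wmin * (f α - fmin) ≤ w α * (f α - fmin) :=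
      mul_le_mul_of_nonneg_right (hwmin_le α) (by linarith [hfmin_le α])
    have h2 : w α * (f α - fmin) ≤ fbar - fmin := by
      have := hkey α; nlinarith
    have h3 : wmin * (f α - fbar) ≤ (1 - wmin) * (fbar - fmin) := by nlinarith
    have h4 : f α - fbar ≤ ((1 - wmin) / wmin) * (fbar - fmin) := by
      rw [div_mul_eq_mul_div, le_div_iff₀ hwmin_pos]; nlinarith
    calc -(fbar - f α) = f α - fbar := by ring
    _ ≤ ((1 - wmin) / wmin) * (fbar - fmin) := h4
    _ ≤ C₃ * (fbar - fmin) := mul_le_mul_of_nonneg_right hCge (by linarith)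
end
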